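/- Let n ≥ 2 and let A be an n×n real matrix with nonnegative entries and a_{11} = 0. Then for every positive integer m, (tr A)^m ≤ (n − 1)^{m−1} · tr(A^m). -/

import Mathlib

open Matrix Polynomial

/-- The eigenvalues of a real square matrix: the multiset of roots (with multiplicity)
of its characteristic polynomial over `ℂ`. -/
noncomputable def eigs {n : ℕ} (A : Matrix (Fin n) (Fin n) ℝ) : Multiset ℂ :=
  ((A.map Complex.ofReal).charpoly).roots

/-- The spectral radius: the maximum of `|λ|` over the eigenvalues `λ`. -/
noncomputable def specRad {n : ℕ} (A : Matrix (Fin n) (Fin n) ℝ) : ℝ :=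
  sSup {r : ℝ | ∃ μ ∈ eigs A, r = ‖μ‖}

/-- The spread: the maximum of `|λ - μ|` over pairs of eigenvalues `λ, μ`. -/
noncomputable def spread {n : ℕ} (A : Matrix (Fin n) (Fin n) ℝ) : ℝ :=
  sSup {r : ℝ | ∃ μ ∈ eigs A, ∃ ν ∈ eigs A, r = ‖μ - ν‖}

lemma pow_entry_nonneg {n : ℕ} (A : Matrix (Fin n) (Fin n) ℝ)
    (hA : ∀ i j, 0 ≤ A i j) (k : ℕ) : ∀ i j, 0 ≤ (A ^ k) i j := by
  induction k with
  | zero => intro i j; simp [Matrix.one_apply]; positivity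
  | succ k ih =>
    intro i j
    rw [pow_succ, Matrix.mul_apply]
    exact Finset.sum_nonneg fun l _ => mul_nonneg (ih i l) (hA l j)

lemma diag_pow_le {n : ℕ} (A : Matrix (Fin n) (Fin n) ℝ)
    (hA : ∀ i j, 0 ≤ A i j) (k : ℕ) (i : Fin n) : (A i i) ^ k ≤ (A ^ k) i i := by
  induction k with
  | zero => simp [Matrix.one_apply]
  | succ k ih =>
    rw [pow_succ, pow_succ, Matrix.mul_apply]
    calc (A i i) ^ k * A i i ≤ (A ^ k) i i * A i i :=
          mul_le_mul_of_nonneg_right ih (hA i i)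
      _ ≤ ∑ l, (A ^ k) i l * A l i :=
          Finset.single_le_sum
            (fun l _ => mul_nonneg (pow_entry_nonneg A hA k i l) (hA l i))
            (Finset.mem_univ i)

theorem jll_ineq_a11_zero (n : ℕ) (hn : 2 ≤ n) (A : Matrix (Fin n) (Fin n) ℝ)
    (hA : ∀ i j, 0 ≤ A i j)
    (h11 : A ⟨0, by omega⟩ ⟨0, by omega⟩ = 0)
    (m : ℕ) (hm : 1 ≤ m) :
    (A.trace) ^ m ≤ ((n - 1 : ℕ) : ℝ) ^ (m - 1) * (A ^ m).trace := by
  set z : Fin n := ⟨0, by omega⟩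
  set s : Finset (Fin n) := Finset.univ.erase z with hs
  have hcard : s.card = n - 1 := by
    rw [hs, Finset.card_erase_of_mem (Finset.mem_univ z), Finset.card_univ, Fintype.card_fin]
  have htr : A.trace = ∑ i ∈ s, A i i := by
    rw [Matrix.trace, ← Finset.add_sum_erase _ _ (Finset.mem_univ z)]
    simp [Matrix.diag, h11, hs]
  obtain ⟨k, rfl⟩ : ∃ k, m = k + 1 := ⟨m - 1, (Nat.succ_pred_eq_of_pos hm).symm⟩
  have hcpos : (0:ℝ) < ((n-1:ℕ):ℝ) := by
    have : 1 ≤ n - 1 := by omega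
    exact_mod_cast Nat.lt_of_lt_of_le Nat.zero_lt_one this
  have key := pow_sum_le_card_mul_sum_pow (f := fun i => A i i)
      (s := s) (fun i _ => hA i i) k
  rw [hcard] at key
  have h1 : (A.trace) ^ (k+1) ≤ ((n-1:ℕ):ℝ) ^ k * ∑ i ∈ s, (A i i) ^ (k+1) := by
    rw [htr]; exact key
  have h2 : ∑ i ∈ s, (A i i) ^ (k+1) ≤ (A ^ (k+1)).trace := by
    calc ∑ i ∈ s, (A i i) ^ (k+1) ≤ ∑ i ∈ s, (A ^ (k+1)) i i :=
          Finset.sum_le_sum fun i _ => diag_pow_le A hA (k+1) i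
      _ ≤ ∑ i, (A ^ (k+1)) i i :=
          Finset.sum_le_sum_of_subset_of_nonneg (Finset.erase_subset _ _)
            (fun i _ _ => pow_entry_nonneg A hA (k+1) i i)
      _ = (A ^ (k+1)).trace := rfl
  calc (A.trace) ^ (k+1) ≤ ((n-1:ℕ):ℝ) ^ k * ∑ i ∈ s, (A i i) ^ (k+1) := h1
    _ ≤ ((n-1:ℕ):ℝ) ^ k * (A ^ (k+1)).trace :=
        mul_le_mul_of_nonneg_left h2 (le_of_lt (by positivity))
    _ = ((n-1:ℕ):ℝ) ^ (k+1-1) * (A ^ (k+1)).trace := by norm_num
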